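/- arXiv:2106.00129 — 4 statements merged into one kernel-verified Lean document; each statement's English description precedes it below -/
import Mathlib

section
/- For γ > 0 and α ≥ 0, the 2×2 determinant with rows (sinh√γ, −∫₀¹(1−r)·sinh(√γ·r) dr) and (α·cosh√γ, −α·∫₀¹(1−r)·cosh(√γ·r) dr − 1) is nonzero. -/
open Real intervalIntegral

lemma my_int_cosh (s : ℝ) (hs : 0 < s) :
    (∫ r in (0:ℝ)..1, (1 - r) * Real.cosh (s * r)) = (Real.cosh s - 1) / s ^ 2 := by
  have h : ∀ r ∈ Set.uIcc (0:ℝ) 1, HasDerivAt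
      (fun x : ℝ => (1 - x) * Real.sinh (s * x) / s + Real.cosh (s * x) / s ^ 2)
      ((1 - r) * Real.cosh (s * r)) r := by
    intro r _
    have h1 : HasDerivAt (fun x : ℝ => s * x) s r := by
      simpa using (hasDerivAt_id r).const_mul s
    have hsinh : HasDerivAt (fun x : ℝ => Real.sinh (s * x)) (Real.cosh (s * r) * s) r :=
      (Real.hasDerivAt_sinh (s * r)).comp r h1
    have hcosh : HasDerivAt (fun x : ℝ => Real.cosh (s * x)) (Real.sinh (s * r) * s) r :=
      (Real.hasDerivAt_cosh (s * r)).comp r h1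
    have hone : HasDerivAt (fun x : ℝ => (1 : ℝ) - x) (-1) r := by
      simpa using (hasDerivAt_id r).const_sub 1
    have := ((hone.mul hsinh).div_const s).add (hcosh.div_const (s ^ 2))
    refine this.congr_deriv ?_
    field_simp
    ring
  have hcont : IntervalIntegrable (fun r => (1 - r) * Real.cosh (s * r)) MeasureTheory.volume 0 1 :=
    (Continuous.intervalIntegrable (by continuity) 0 1)
  rw [intervalIntegral.integral_eq_sub_of_hasDerivAt h hcont]
  simp
  field_simp

lemma my_int_sinh (s : ℝ) (hs : 0 < s) :
    (∫ r in (0:ℝ)..1, (1 - r) * Real.sinh (s * r)) = (Real.sinh s - s) / s ^ 2 := by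
  have h : ∀ r ∈ Set.uIcc (0:ℝ) 1, HasDerivAt
      (fun x : ℝ => (1 - x) * Real.cosh (s * x) / s + Real.sinh (s * x) / s ^ 2)
      ((1 - r) * Real.sinh (s * r)) r := by
    intro r _
    have h1 : HasDerivAt (fun x : ℝ => s * x) s r := by
      simpa using (hasDerivAt_id r).const_mul s
    have hsinh : HasDerivAt (fun x : ℝ => Real.sinh (s * x)) (Real.cosh (s * r) * s) r :=
      (Real.hasDerivAt_sinh (s * r)).comp r h1
    have hcosh : HasDerivAt (fun x : ℝ => Real.cosh (s * x)) (Real.sinh (s * r) * s) r :=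
      (Real.hasDerivAt_cosh (s * r)).comp r h1
    have hone : HasDerivAt (fun x : ℝ => (1 : ℝ) - x) (-1) r := by
      simpa using (hasDerivAt_id r).const_sub 1
    have := ((hone.mul hcosh).div_const s).add (hsinh.div_const (s ^ 2))
    refine this.congr_deriv ?_
    field_simp
    ring
  have hcont : IntervalIntegrable (fun r => (1 - r) * Real.sinh (s * r)) MeasureTheory.volume 0 1 :=
    (Continuous.intervalIntegrable (by continuity) 0 1)
  rw [intervalIntegral.integral_eq_sub_of_hasDerivAt h hcont]
  simp
  field_simp

lemma my_sinh_lt (s : ℝ) (hs : 0 < s) : Real.sinh s < s * Real.cosh s := by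
  have key : StrictMonoOn (fun x : ℝ => x * Real.cosh x - Real.sinh x) (Set.Ici 0) := by
    apply strictMonoOn_of_deriv_pos (convex_Ici 0)
    · exact ((continuous_id.mul Real.continuous_cosh).sub Real.continuous_sinh).continuousOn
    · intro x hx
      rw [interior_Ici] at hx
      have hd : HasDerivAt (fun x : ℝ => x * Real.cosh x - Real.sinh x)
          (x * Real.sinh x) x := by
        have := ((hasDerivAt_id x).mul (Real.hasDerivAt_cosh x)).sub (Real.hasDerivAt_sinh x)
        refine this.congr_deriv ?_
        simp [mul_comm]
      rw [hd.deriv]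
      exact mul_pos hx (Real.sinh_pos_iff.mpr hx)
  have := key (Set.self_mem_Ici) (Set.mem_Ici.mpr hs.le) hs
  simp at this
  linarith

/-- The 2×2 determinant with rows
(sinh√γ, −∫₀¹(1−r)sinh(√γ r)dr) and (α cosh√γ, −α∫₀¹(1−r)cosh(√γ r)dr − 1)
is nonzero for γ > 0, α ≥ 0. -/
theorem stmt_1 (γ α : ℝ) (hγ : 0 < γ) (hα : 0 ≤ α) :
    Real.sinh (Real.sqrt γ) *
        (-α * (∫ r in (0:ℝ)..1, (1 - r) * Real.cosh (Real.sqrt γ * r)) - 1)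
      - (-(∫ r in (0:ℝ)..1, (1 - r) * Real.sinh (Real.sqrt γ * r))) *
        (α * Real.cosh (Real.sqrt γ)) ≠ 0 := by
  set s := Real.sqrt γ with hsdef
  have hs : 0 < s := Real.sqrt_pos.mpr hγ
  rw [my_int_cosh s hs, my_int_sinh s hs]
  have h1 : Real.sinh s < s * Real.cosh s := my_sinh_lt s hs
  have h2 : 0 < Real.sinh s := Real.sinh_pos_iff.mpr hs
  have h3 : (0:ℝ) < s ^ 2 := by positivity
  have key : Real.sinh s * (-α * ((Real.cosh s - 1) / s ^ 2) - 1)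
      - -((Real.sinh s - s) / s ^ 2) * (α * Real.cosh s)
      = α * (Real.sinh s - s * Real.cosh s) / s ^ 2 - Real.sinh s := by
    field_simp
    ring
  rw [key]
  have : α * (Real.sinh s - s * Real.cosh s) / s ^ 2 ≤ 0 := by
    apply div_nonpos_of_nonpos_of_nonneg _ h3.le
    exact mul_nonpos_of_nonneg_of_nonpos hα (by linarith)
  intro h
  linarith
end

section
/- Let γ > 0 and μ > 0. If φ : [0,1] → ℝ is a C⁴ function satisfying φ⁽⁴⁾ − γφ'' = μ²φ on [0,1], φ(1) = φ''(1) = 0, and φ'(0) = φ''(0) = 0, then (φ⁽³⁾(1))² − (φ⁽³⁾(0))² = −μ²(φ'(1))². -/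
open Set

/-- Energy identity: if φ is C⁴ on [0,1], φ⁽⁴⁾ − γφ'' = μ²φ on [0,1],
φ(1) = φ''(1) = 0 and φ'(0) = φ''(0) = 0, then
(φ⁽³⁾(1))² − (φ⁽³⁾(0))² = −μ²(φ'(1))². -/
theorem stmt_2 (γ μ : ℝ) (hγ : 0 < γ) (hμ : 0 < μ) (φ : ℝ → ℝ)
    (hreg : ContDiffOn ℝ 4 φ (Icc 0 1))
    (hode : ∀ s ∈ Icc (0:ℝ) 1,
      iteratedDerivWithin 4 φ (Icc 0 1) s - γ * iteratedDerivWithin 2 φ (Icc 0 1) s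
        = μ ^ 2 * φ s)
    (hb1 : φ 1 = 0) (hb2 : iteratedDerivWithin 2 φ (Icc 0 1) 1 = 0)
    (hb3 : iteratedDerivWithin 1 φ (Icc 0 1) 0 = 0)
    (hb4 : iteratedDerivWithin 2 φ (Icc 0 1) 0 = 0) :
    (iteratedDerivWithin 3 φ (Icc 0 1) 1) ^ 2
        - (iteratedDerivWithin 3 φ (Icc 0 1) 0) ^ 2
      = -(μ ^ 2) * (iteratedDerivWithin 1 φ (Icc 0 1) 1) ^ 2 := by
  set s : Set ℝ := Icc (0:ℝ) 1 with hs
  have hu : UniqueDiffOn ℝ s := uniqueDiffOn_Icc (by norm_num)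
  set f : ℕ → ℝ → ℝ := fun k => iteratedDerivWithin k φ s with hf
  -- each fk (k ≤ 3) has derivative f (k+1) within s
  have hder : ∀ k : ℕ, k < 4 → ∀ x ∈ s, HasDerivWithinAt (f k) (f (k+1) x) s x := by
    intro k hk x hx
    have hdiff : DifferentiableOn ℝ (f k) s :=
      hreg.differentiableOn_iteratedDerivWithin (by exact_mod_cast hk) hu
    have h1 : HasDerivWithinAt (f k) (derivWithin (f k) s x) s x :=
      (hdiff x hx).hasDerivWithinAt
    have h2 : f (k+1) x = derivWithin (f k) s x :=
      congrFun iteratedDerivWithin_succ x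
    rw [h2]; exact h1
  have hφf0 : f 0 = φ := by
    funext x; simp [hf, iteratedDerivWithin_zero]
  -- the energy function
  set F : ℝ → ℝ := fun x =>
    (f 3 x)^2 - γ * (f 2 x)^2 - 2 * μ^2 * (φ x * f 2 x) + μ^2 * (f 1 x)^2 with hF
  have hFder : ∀ x ∈ s, HasDerivWithinAt F 0 s x := by
    intro x hx
    have h0 : HasDerivWithinAt φ (f 1 x) s x := by
      have := hder 0 (by norm_num) x hx; rwa [hφf0] at this
    have h1 := hder 1 (by norm_num) x hx
    have h2 := hder 2 (by norm_num) x hx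
    have h3 := hder 3 (by norm_num) x hx
    have hd : HasDerivWithinAt F
        (2 * f 3 x * f 4 x - γ * (2 * f 2 x * f 3 x)
          - 2 * μ^2 * (f 1 x * f 2 x + φ x * f 3 x) + μ^2 * (2 * f 1 x * f 2 x)) s x := by
      have := (((h3.pow 2).sub ((h2.pow 2).const_mul γ)).sub
          ((h0.mul h2).const_mul (2 * μ^2))).add ((h1.pow 2).const_mul (μ^2))
      convert this using 1
      · rfl
      · rfl
      · rfl
      · ring
    convert hd using 1
    have hode' := hode x hx
    have : f 4 x = γ * f 2 x + μ^2 * φ x := by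
      have : f 4 x - γ * f 2 x = μ^2 * φ x := hode'
      linarith
    rw [this]; ring
  have hFcont : ContinuousOn F s := by
    intro x hx
    exact ((hFder x hx).continuousWithinAt)
  have hconst : F 1 = F 0 := by
    have := constant_of_has_deriv_right_zero (a := (0:ℝ)) (b := 1) hFcont
      (fun y hy => (hFder y (Ico_subset_Icc_self hy)).mono_of_mem_nhdsWithin
        (Icc_mem_nhdsGE_of_mem hy))
    exact this 1 (by norm_num)
  -- evaluate F at endpoints
  have h1 : F 1 = (f 3 1)^2 + μ^2 * (f 1 1)^2 := by
    simp only [hF]; rw [show f 2 1 = 0 from hb2, hb1]; ring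
  have h0 : F 0 = (f 3 0)^2 := by
    simp only [hF]; rw [show f 2 0 = 0 from hb4, show f 1 0 = 0 from hb3]; ring
  rw [h1, h0] at hconst
  simp only [hf] at *
  linarith
end

section
/- Let γ > 0 and μ ≠ 0 real. Suppose φ : [0,1] → ℝ solves φ⁽⁴⁾ − γφ'' = μ²φ with φ(1) = φ''(1) = φ'(0) = φ''(0) = 0 and additionally φ⁽³⁾(0) = 0. Then φ ≡ 0. -/
open Set

set_option maxHeartbeats 1000000 in
/-- If additionally φ⁽³⁾(0) = 0, then φ vanishes identically on [0,1]. -/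
theorem stmt_3 (γ μ : ℝ) (hγ : 0 < γ) (hμ : μ ≠ 0) (φ : ℝ → ℝ)
    (hreg : ContDiffOn ℝ 4 φ (Icc 0 1))
    (hode : ∀ s ∈ Icc (0:ℝ) 1,
      iteratedDerivWithin 4 φ (Icc 0 1) s - γ * iteratedDerivWithin 2 φ (Icc 0 1) s
        = μ ^ 2 * φ s)
    (hb1 : φ 1 = 0) (hb2 : iteratedDerivWithin 2 φ (Icc 0 1) 1 = 0)
    (hb3 : iteratedDerivWithin 1 φ (Icc 0 1) 0 = 0)
    (hb4 : iteratedDerivWithin 2 φ (Icc 0 1) 0 = 0)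
    (hb5 : iteratedDerivWithin 3 φ (Icc 0 1) 0 = 0) :
    ∀ s ∈ Icc (0:ℝ) 1, φ s = 0 := by
  have hU : UniqueDiffOn ℝ (Icc (0:ℝ) 1) := uniqueDiffOn_Icc zero_lt_one
  set f : ℕ → ℝ → ℝ := fun i => iteratedDerivWithin i φ (Icc 0 1) with hf
  have key : ∀ i : ℕ, i < 4 → ∀ x ∈ Icc (0:ℝ) 1,
      HasDerivWithinAt (f i) (f (i+1) x) (Icc 0 1) x := by
    intro i hi x hx
    have hd := (hreg.differentiableOn_iteratedDerivWithin
      (by exact_mod_cast hi) hU x hx).hasDerivWithinAt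
    rw [← iteratedDerivWithin_succ] at hd
    exact hd
  have h0 : ∀ x ∈ Icc (0:ℝ) 1, HasDerivWithinAt φ (f 1 x) (Icc 0 1) x := by
    intro x hx
    have := key 0 (by norm_num) x hx
    rwa [show f 0 = φ from iteratedDerivWithin_zero] at this
  have h1 : ∀ x ∈ Icc (0:ℝ) 1, HasDerivWithinAt (f 1) (f 2 x) (Icc 0 1) x :=
    key 1 (by norm_num)
  have h2 : ∀ x ∈ Icc (0:ℝ) 1, HasDerivWithinAt (f 2) (f 3 x) (Icc 0 1) x :=
    key 2 (by norm_num)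
  have h3 : ∀ x ∈ Icc (0:ℝ) 1, HasDerivWithinAt (f 3) (f 4 x) (Icc 0 1) x :=
    key 3 (by norm_num)
  have hode' : ∀ x ∈ Icc (0:ℝ) 1, f 4 x = γ * f 2 x + μ ^ 2 * φ x := by
    intro x hx; have := hode x hx; rw [hf]; dsimp only; linarith
  have h01 : (0:ℝ) ∈ Icc (0:ℝ) 1 := by constructor <;> norm_num
  have h11 : (1:ℝ) ∈ Icc (0:ℝ) 1 := by constructor <;> norm_num
  have hf21 : f 2 1 = 0 := hb2
  have hf10 : f 1 0 = 0 := hb3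
  have hf20 : f 2 0 = 0 := hb4
  have hf30 : f 3 0 = 0 := hb5
  have hμ2 : 0 < μ ^ 2 := by positivity
  -- Step 1: the energy E is constant; deduce f 3 1 = 0 and f 1 1 = 0
  have hEderiv : ∀ x ∈ Icc (0:ℝ) 1, HasDerivWithinAt (fun x =>
      f 3 x * f 3 x - γ * (f 2 x * f 2 x) + μ^2 * (f 1 x * f 1 x)
        - 2*μ^2 * (φ x * f 2 x)) 0 (Icc 0 1) x := by
    intro x hx
    have hD : HasDerivWithinAt (fun x =>
        f 3 x * f 3 x - γ * (f 2 x * f 2 x) + μ^2 * (f 1 x * f 1 x)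
          - 2*μ^2 * (φ x * f 2 x))
        ((f 4 x * f 3 x + f 3 x * f 4 x) - γ * (f 3 x * f 2 x + f 2 x * f 3 x)
          + μ^2 * (f 2 x * f 1 x + f 1 x * f 2 x)
          - 2*μ^2 * (f 1 x * f 2 x + φ x * f 3 x)) (Icc 0 1) x :=
      (((((h3 x hx).mul (h3 x hx)).sub
        (((h2 x hx).mul (h2 x hx)).const_mul γ)).add
        (((h1 x hx).mul (h1 x hx)).const_mul (μ^2))).sub
        (((h0 x hx).mul (h2 x hx)).const_mul (2*μ^2)))
    have heq : ((f 4 x * f 3 x + f 3 x * f 4 x) - γ * (f 3 x * f 2 x + f 2 x * f 3 x)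
          + μ^2 * (f 2 x * f 1 x + f 1 x * f 2 x)
          - 2*μ^2 * (f 1 x * f 2 x + φ x * f 3 x)) = 0 := by
      rw [hode' x hx]; ring
    rwa [heq] at hD
  have hEcont : ContinuousOn (fun x =>
      f 3 x * f 3 x - γ * (f 2 x * f 2 x) + μ^2 * (f 1 x * f 1 x)
        - 2*μ^2 * (φ x * f 2 x)) (Icc 0 1) :=
    fun x hx => (hEderiv x hx).continuousWithinAt
  have hEint : ∀ x ∈ interior (Icc (0:ℝ) 1), HasDerivWithinAt (fun x =>
      f 3 x * f 3 x - γ * (f 2 x * f 2 x) + μ^2 * (f 1 x * f 1 x)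
        - 2*μ^2 * (φ x * f 2 x)) ((fun _ => (0:ℝ)) x) (interior (Icc 0 1)) x :=
    fun x hx => (hEderiv x (interior_subset hx)).mono interior_subset
  have hmono := monotoneOn_of_hasDerivWithinAt_nonneg (convex_Icc (0:ℝ) 1)
    hEcont hEint (fun _ _ => le_refl 0)
  have hanti := antitoneOn_of_hasDerivWithinAt_nonpos (convex_Icc (0:ℝ) 1)
    hEcont hEint (fun _ _ => le_refl 0)
  have hEeq : f 3 1 * f 3 1 - γ * (f 2 1 * f 2 1) + μ^2 * (f 1 1 * f 1 1)
        - 2*μ^2 * (φ 1 * f 2 1)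
      = f 3 0 * f 3 0 - γ * (f 2 0 * f 2 0) + μ^2 * (f 1 0 * f 1 0)
        - 2*μ^2 * (φ 0 * f 2 0) :=
    le_antisymm (hanti h01 h11 zero_le_one) (hmono h01 h11 zero_le_one)
  rw [hf21, hf10, hf20, hf30] at hEeq
  have hE1 : f 3 1 * f 3 1 + μ^2 * (f 1 1 * f 1 1) = 0 := by linarith
  have hf31 : f 3 1 = 0 := by
    have := mul_self_nonneg (f 3 1)
    have := mul_nonneg hμ2.le (mul_self_nonneg (f 1 1))
    have : f 3 1 * f 3 1 = 0 := by linarith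
    exact mul_self_eq_zero.mp this
  have hf11 : f 1 1 = 0 := by
    have := mul_self_nonneg (f 3 1)
    have h4 : μ^2 * (f 1 1 * f 1 1) = 0 := by nlinarith [mul_self_nonneg (f 1 1)]
    have : f 1 1 * f 1 1 = 0 := by
      rcases mul_eq_zero.mp h4 with h | h
      · exact absurd h hμ2.ne'
      · exact h
    exact mul_self_eq_zero.mp this
  -- Step 2: Gronwall via monotone (φ² + φ'² + φ''² + φ'''²) · exp(K x)
  set K : ℝ := 2 + γ + μ^2 with hK
  have hhderiv : ∀ x ∈ Icc (0:ℝ) 1, HasDerivWithinAt (fun x =>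
      (φ x * φ x + f 1 x * f 1 x + f 2 x * f 2 x + f 3 x * f 3 x) * Real.exp (K * x))
      (((f 1 x * φ x + φ x * f 1 x) + (f 2 x * f 1 x + f 1 x * f 2 x)
        + (f 3 x * f 2 x + f 2 x * f 3 x) + (f 4 x * f 3 x + f 3 x * f 4 x))
        * Real.exp (K * x)
        + (φ x * φ x + f 1 x * f 1 x + f 2 x * f 2 x + f 3 x * f 3 x)
          * (Real.exp (K * x) * (K * 1))) (Icc 0 1) x := by
    intro x hx
    have hGd : HasDerivWithinAt (fun x =>
        φ x * φ x + f 1 x * f 1 x + f 2 x * f 2 x + f 3 x * f 3 x)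
        ((f 1 x * φ x + φ x * f 1 x) + (f 2 x * f 1 x + f 1 x * f 2 x)
          + (f 3 x * f 2 x + f 2 x * f 3 x) + (f 4 x * f 3 x + f 3 x * f 4 x)) (Icc 0 1) x :=
      ((((h0 x hx).mul (h0 x hx)).add ((h1 x hx).mul (h1 x hx))).add
        ((h2 x hx).mul (h2 x hx))).add ((h3 x hx).mul (h3 x hx))
    have hexp : HasDerivWithinAt (fun x => Real.exp (K * x))
        (Real.exp (K * x) * (K * 1)) (Icc 0 1) x :=
      (((hasDerivAt_id x).const_mul K).exp).hasDerivWithinAt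
    exact hGd.mul hexp
  have hhnonneg : ∀ x ∈ Icc (0:ℝ) 1, 0 ≤
      (((f 1 x * φ x + φ x * f 1 x) + (f 2 x * f 1 x + f 1 x * f 2 x)
        + (f 3 x * f 2 x + f 2 x * f 3 x) + (f 4 x * f 3 x + f 3 x * f 4 x))
        * Real.exp (K * x)
        + (φ x * φ x + f 1 x * f 1 x + f 2 x * f 2 x + f 3 x * f 3 x)
          * (Real.exp (K * x) * (K * 1))) := by
    intro x hx
    have hexp : (0:ℝ) < Real.exp (K * x) := Real.exp_pos _
    have hode2 := hode' x hx
    have hineq : 0 ≤ ((f 1 x * φ x + φ x * f 1 x) + (f 2 x * f 1 x + f 1 x * f 2 x)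
        + (f 3 x * f 2 x + f 2 x * f 3 x) + (f 4 x * f 3 x + f 3 x * f 4 x))
        + (φ x * φ x + f 1 x * f 1 x + f 2 x * f 2 x + f 3 x * f 3 x) * K := by
      rw [hode2, hK]
      nlinarith [sq_nonneg (φ x + f 1 x), sq_nonneg (f 1 x + f 2 x),
        sq_nonneg (f 2 x + f 3 x), sq_nonneg (φ x + f 3 x),
        sq_nonneg (φ x), sq_nonneg (f 1 x), sq_nonneg (f 2 x), sq_nonneg (f 3 x),
        mul_nonneg hγ.le (sq_nonneg (f 2 x + f 3 x)),
        mul_nonneg hμ2.le (sq_nonneg (φ x + f 3 x)),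
        mul_nonneg hγ.le (sq_nonneg (f 2 x)), mul_nonneg hγ.le (sq_nonneg (f 3 x)),
        mul_nonneg hμ2.le (sq_nonneg (φ x)), mul_nonneg hμ2.le (sq_nonneg (f 3 x))]
    linarith [mul_nonneg hineq hexp.le]
  have hhcont : ContinuousOn (fun x =>
      (φ x * φ x + f 1 x * f 1 x + f 2 x * f 2 x + f 3 x * f 3 x) * Real.exp (K * x))
      (Icc (0:ℝ) 1) := fun x hx => (hhderiv x hx).continuousWithinAt
  have hhmono := monotoneOn_of_hasDerivWithinAt_nonneg (convex_Icc (0:ℝ) 1) hhcont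
    (fun x hx => (hhderiv x (interior_subset hx)).mono interior_subset)
    (fun x hx => hhnonneg x (interior_subset hx))
  intro s hs
  have hhs : (φ s * φ s + f 1 s * f 1 s + f 2 s * f 2 s + f 3 s * f 3 s) * Real.exp (K * s)
      ≤ (φ 1 * φ 1 + f 1 1 * f 1 1 + f 2 1 * f 2 1 + f 3 1 * f 3 1) * Real.exp (K * 1) :=
    hhmono hs h11 hs.2
  rw [hb1, hf11, hf21, hf31] at hhs
  have hexp : (0:ℝ) < Real.exp (K * s) := Real.exp_pos _
  have hG : 0 ≤ φ s * φ s + f 1 s * f 1 s + f 2 s * f 2 s + f 3 s * f 3 s :=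
    add_nonneg (add_nonneg (add_nonneg (mul_self_nonneg (φ s)) (mul_self_nonneg (f 1 s)))
      (mul_self_nonneg (f 2 s))) (mul_self_nonneg (f 3 s))
  have hGz : φ s * φ s + f 1 s * f 1 s + f 2 s * f 2 s + f 3 s * f 3 s = 0 := by
    nlinarith
  have : φ s * φ s = 0 := by
    nlinarith [mul_self_nonneg (φ s), mul_self_nonneg (f 1 s),
      mul_self_nonneg (f 2 s), mul_self_nonneg (f 3 s)]
  exact mul_self_eq_zero.mp this
end

section
/- For ρ_n = (n + 1/4)π with n ∈ ℕ, sinh((i−1)ρ_n)/sinh((1+i)ρ_n) = i + O(e^{−2ρ_n}) as n → ∞; that is, |sinh((i−1)ρ_n) − i·sinh((1+i)ρ_n)| ≤ C·e^{−ρ_n} for a constant C and all large n. -/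
open Complex

/-- For ρₙ = (n + 1/4)π, sinh((i−1)ρₙ)/sinh((1+i)ρₙ) = i + O(e^{−2ρₙ}); i.e.
|sinh((i−1)ρₙ) − i sinh((1+i)ρₙ)| ≤ C e^{−ρₙ} for large n. -/
theorem stmt_18 :
    ∃ C : ℝ, ∃ N : ℕ, ∀ n : ℕ, N ≤ n →
      ‖Complex.sinh ((I - 1) * (((n : ℝ) + 1 / 4) * Real.pi))
          - I * Complex.sinh ((1 + I) * (((n : ℝ) + 1 / 4) * Real.pi))‖
        ≤ C * Real.exp (-(((n : ℝ) + 1 / 4) * Real.pi)) := by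
  refine ⟨1, 0, fun n _ => ?_⟩
  set ρ : ℝ := ((n : ℝ) + 1 / 4) * Real.pi with hρ
  set z : ℂ := (ρ : ℂ)
  set a := Complex.exp z
  set b := Complex.exp (-z)
  set c := Complex.exp (I * z)
  set d := Complex.exp (-(I * z))
  have hc2 : c * c = I := by
    rw [← Complex.exp_add]
    have : I * z + I * z = ((2 * ρ : ℝ) : ℂ) * I := by push_cast; ring
    rw [this, Complex.exp_mul_I]
    have h2ρ : 2 * ρ = Real.pi / 2 + (n : ℝ) * (2 * Real.pi) := by rw [hρ]; ring
    rw [← Complex.ofReal_cos, ← Complex.ofReal_sin, h2ρ,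
      Real.cos_add_nat_mul_two_pi, Real.sin_add_nat_mul_two_pi,
      Real.cos_pi_div_two, Real.sin_pi_div_two]
    simp
  have hcd : c * d = 1 := by rw [← Complex.exp_add]; simp
  have hc0 : c ≠ 0 := Complex.exp_ne_zero _
  have hd : d + I * c = 0 := by
    apply mul_left_cancel₀ hc0
    have : c * (d + I * c) = c * d + I * (c * c) := by ring
    rw [this, hcd, hc2]
    simp [Complex.I_mul_I]
  have h1 : Complex.sinh ((I - 1) * z) = (c * b - a * d) / 2 := by
    rw [show Complex.sinh ((I - 1) * z) = (Complex.exp ((I-1)*z) - Complex.exp (-((I-1)*z))) / 2 from rfl,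
      show (I-1)*z = I*z + (-z) by ring, show -(I*z + -z) = z + -(I*z) by ring,
      Complex.exp_add, Complex.exp_add]
  have h2 : Complex.sinh ((1 + I) * z) = (a * c - b * d) / 2 := by
    rw [show Complex.sinh ((1 + I) * z) = (Complex.exp ((1+I)*z) - Complex.exp (-((1+I)*z))) / 2 from rfl,
      show (1+I)*z = z + I*z by ring, show -(z + I*z) = -z + -(I*z) by ring,
      Complex.exp_add, Complex.exp_add]
  have key : Complex.sinh ((I - 1) * z) - I * Complex.sinh ((1 + I) * z)
      = (c * b + I * b * d) / 2 := by
    rw [h1, h2]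
    linear_combination (-(a) / 2) * hd
  have hz : ((((n : ℝ) + 1 / 4) * Real.pi : ℝ) : ℂ) = z := rfl
  rw [show ((I - 1) * (((n : ℝ) + 1 / 4) * Real.pi) : ℂ) = (I - 1) * z by rw [← hz]; push_cast; ring,
    show ((1 + I) * (((n : ℝ) + 1 / 4) * Real.pi) : ℂ) = (1 + I) * z by rw [← hz]; push_cast; ring,
    key]
  have hb : ‖b‖ = Real.exp (-ρ) := by
    simp [b, Complex.norm_exp, z]
  have hcabs : ‖c‖ = 1 := by
    simp [c, Complex.norm_exp, z]
  have hdabs : ‖d‖ = 1 := by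
    simp [d, Complex.norm_exp, z]
  calc ‖(c * b + I * b * d) / 2‖
      ≤ (‖c * b‖ + ‖I * b * d‖) / 2 := by
        rw [norm_div]
        simp only [Complex.norm_two]
        gcongr
        exact norm_add_le _ _
    _ = Real.exp (-ρ) := by
        simp [norm_mul, hb, hcabs, hdabs]
    _ ≤ 1 * Real.exp (-ρ) := by simp
end
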